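/- The function u(x,y,z,t) = 2/(1 + 2C e^{t-x}) satisfies the (3+1)-dimensional Zakharov–Kuznetsov equation u_t + u u_x + u_xx + u_yy + u_zz = 0 (with nonlinearity coefficient a = 1) for every real constant C. -/

import Mathlib

noncomputable def ZKh (C : ℝ) : ℝ → ℝ := fun s => 2 / (1 + 2 * C * Real.exp s)

lemma ZKv_hasDeriv (C s : ℝ) :
    HasDerivAt (fun s => 1 + 2 * C * Real.exp s) (2 * C * Real.exp s) s := by
  simpa using ((Real.hasDerivAt_exp s).const_mul (2 * C)).const_add 1

lemma ZKh_hasDeriv (C s : ℝ) (hs : 1 + 2 * C * Real.exp s ≠ 0) :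
    HasDerivAt (ZKh C) (-4 * C * Real.exp s / (1 + 2 * C * Real.exp s) ^ 2) s := by
  have h := (hasDerivAt_const s (2 : ℝ)).fun_div (ZKv_hasDeriv C s) hs
  refine h.congr_deriv ?_
  congr 1
  ring

lemma ZKh_deriv_eventually (C s : ℝ) (hs : 1 + 2 * C * Real.exp s ≠ 0) :
    deriv (ZKh C) =ᶠ[nhds s] fun r => -4 * C * Real.exp r / (1 + 2 * C * Real.exp r) ^ 2 := by
  have hc : Continuous fun r : ℝ => 1 + 2 * C * Real.exp r := by continuity
  have hopen : IsOpen {r : ℝ | 1 + 2 * C * Real.exp r ≠ 0} :=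
    isOpen_compl_singleton.preimage hc
  filter_upwards [hopen.mem_nhds hs] with r hr
  exact (ZKh_hasDeriv C r hr).deriv

lemma ZKh_deriv2 (C s : ℝ) (hs : 1 + 2 * C * Real.exp s ≠ 0) :
    deriv (deriv (ZKh C)) s =
      (-4 * C * Real.exp s * (1 + 2 * C * Real.exp s) ^ 2
        + 4 * C * Real.exp s * (2 * (1 + 2 * C * Real.exp s) * (2 * C * Real.exp s)))
        / ((1 + 2 * C * Real.exp s) ^ 2) ^ 2 := by
  rw [(ZKh_deriv_eventually C s hs).deriv_eq]
  have hnum : HasDerivAt (fun r : ℝ => -4 * C * Real.exp r) (-4 * C * Real.exp s) s := by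
    simpa [mul_assoc] using (Real.hasDerivAt_exp s).const_mul (-4 * C)
  have hden : HasDerivAt (fun r : ℝ => (1 + 2 * C * Real.exp r) ^ 2)
      (2 * (1 + 2 * C * Real.exp s) * (2 * C * Real.exp s)) s := by
    simpa using (ZKv_hasDeriv C s).fun_pow 2
  have h := hnum.fun_div hden (pow_ne_zero 2 hs)
  rw [h.deriv]
  ring

/-- The function `u(x,y,z,t) = 2/(1 + 2C e^{t-x})` solves the (3+1)-dimensional
Zakharov–Kuznetsov equation `u_t + u u_x + u_xx + u_yy + u_zz = 0` (with `a = 1`),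
for every real constant `C`, at every point where the denominator is nonzero. -/
theorem stmt0 (C : ℝ)
    (u : ℝ → ℝ → ℝ → ℝ → ℝ)
    (hu : ∀ x y z t, u x y z t = 2 / (1 + 2 * C * Real.exp (t - x))) :
    ∀ x y z t, 1 + 2 * C * Real.exp (t - x) ≠ 0 →
      deriv (fun t' => u x y z t') t
        + u x y z t * deriv (fun x' => u x' y z t) x
        + deriv (deriv (fun x' => u x' y z t)) x
        + deriv (deriv (fun y' => u x y' z t)) y
        + deriv (deriv (fun z' => u x y z' t)) z = 0 := by
  intro x y z t hden
  have hut : (fun t' => u x y z t') = fun t' => ZKh C (t' - x) := by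
    funext t'; rw [hu]; rfl
  have hux : (fun x' => u x' y z t) = fun x' => ZKh C (t - x') := by
    funext x'; rw [hu]; rfl
  have huy : (fun y' => u x y' z t) = fun _ => 2 / (1 + 2 * C * Real.exp (t - x)) := by
    funext y'; rw [hu]
  have huz : (fun z' => u x y z' t) = fun _ => 2 / (1 + 2 * C * Real.exp (t - x)) := by
    funext z'; rw [hu]
  have hxx : deriv (fun x' => ZKh C (t - x')) = fun x' => -deriv (ZKh C) (t - x') := by
    funext r; exact deriv_comp_const_sub (ZKh C) t r
  rw [hut, hux, huy, huz, hu]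
  rw [deriv_comp_sub_const, deriv_comp_const_sub, hxx]
  rw [deriv.fun_neg, deriv_comp_const_sub]
  simp only [deriv_const, neg_neg]
  rw [(ZKh_hasDeriv C (t - x) hden).deriv, ZKh_deriv2 C (t - x) hden]
  have h0 : deriv (deriv (fun _ : ℝ => 2 / (1 + 2 * C * Real.exp (t - x)))) = fun _ => 0 := by
    funext r; simp [deriv_const]
  rw [h0]
  field_simp
  ring
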